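/- For the ODE u' = (W(e^{-u-1})+1)/(1-x), where W is the Lambert W function, the quantity A(φ) = φ_x + φφ_u equals 1/(x-1)² and hence the curvature K = -∂_u(A(φ)) of the associated surface is zero. -/

import Mathlib

/-- For the ODE u' = (W(e^{-u-1})+1)/(1-x), with W the Lambert
W function, A(φ) = φ_x + φφ_u = 1/(x-1)², independent of u (hence the
curvature K = -∂_u(A(φ)) of the associated surface vanishes). -/
theorem stmt12 (W : ℝ → ℝ)
    (hW : ∀ x, 0 < x → W x * Real.exp (W x) = x)
    (hW' : ∀ x, 0 < x → HasDerivAt W (1 / (Real.exp (W x) * (1 + W x))) x)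
    (φ : ℝ → ℝ → ℝ)
    (hφdef : ∀ x u, φ x u = (W (Real.exp (-u - 1)) + 1) / (1 - x)) :
    ∀ x u : ℝ, x ≠ 1 →
      deriv (fun x' => φ x' u) x + φ x u * deriv (fun u' => φ x u') u
        = 1 / (x - 1)^2 := by
  intro x u hx
  set t : ℝ := Real.exp (-u - 1) with ht_def
  have ht : 0 < t := Real.exp_pos _
  have hWt := hW t ht
  have hW't := hW' t ht
  have hexp : (0:ℝ) < Real.exp (W t) := Real.exp_pos _
  have hWpos : 0 < W t := by nlinarith
  have h1W : 1 + W t ≠ 0 := by linarith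
  have hx1 : (1 : ℝ) - x ≠ 0 := fun h => hx (by linarith)
  -- x-derivative
  have hdenom : HasDerivAt (fun x' : ℝ => 1 - x') (-1) x := by
    simpa using (hasDerivAt_id x).const_sub 1
  have hdx : HasDerivAt (fun x' => (W t + 1) / (1 - x'))
      ((0 * (1 - x) - (W t + 1) * (-1)) / (1 - x) ^ 2) x :=
    (hasDerivAt_const x (W t + 1)).div hdenom hx1
  -- u-derivative
  have hinner : HasDerivAt (fun u' : ℝ => Real.exp (-u' - 1)) (t * (-1)) u := by
    simpa [ht_def] using (((hasDerivAt_id u).neg.sub_const 1).exp)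
  have hWcomp : HasDerivAt (fun u' : ℝ => W (Real.exp (-u' - 1)))
      (1 / (Real.exp (W t) * (1 + W t)) * (t * (-1))) u := by
    simpa [ht_def, Function.comp_def] using hW't.comp u hinner
  have hdu : HasDerivAt (fun u' => (W (Real.exp (-u' - 1)) + 1) / (1 - x))
      ((1 / (Real.exp (W t) * (1 + W t)) * (t * (-1))) / (1 - x)) u :=
    (hWcomp.add_const 1).div_const (1 - x)
  have e1 : deriv (fun x' => φ x' u) x
      = (0 * (1 - x) - (W t + 1) * (-1)) / (1 - x) ^ 2 := by
    have : (fun x' => φ x' u) = fun x' => (W t + 1) / (1 - x') := by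
      funext x'; rw [hφdef]
    rw [this]; exact hdx.deriv
  have e2 : deriv (fun u' => φ x u') u
      = (1 / (Real.exp (W t) * (1 + W t)) * (t * (-1))) / (1 - x) := by
    have : (fun u' => φ x u') = fun u' => (W (Real.exp (-u' - 1)) + 1) / (1 - x) := by
      funext u'; rw [hφdef]
    rw [this]; exact hdu.deriv
  rw [e1, e2, hφdef, ← ht_def]
  have hE : Real.exp (W t) ≠ 0 := ne_of_gt hexp
  have hx2 : x - 1 ≠ 0 := sub_ne_zero.mpr hx
  field_simp
  linear_combination ((1 - x)^2 * (W t + 1)) * hWt
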